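/- Suppose v* ∈ ℝⁿ satisfies ∇F(v*) = 0 and ∇²F(v*) ⪰ 0, where F(v) = f(v ⊙ v) for a C² function f. Then x* := v* ⊙ v* satisfies weak second-order necessary conditions for min f(x) subject to x ≥ 0: x* ≥ 0, ∇f(x*) ≥ 0, x*_i [∇f(x*)]_i = 0 for all i, and wᵀ∇²f(x*)w ≥ 0 for all w with w_i = 0 whenever x*_i = 0. -/

import Mathlib

noncomputable def grad {n : ℕ} (f : (Fin n → ℝ) → ℝ) (x : Fin n → ℝ) (i : Fin n) : ℝ :=
  fderiv ℝ f x (Pi.single i 1)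

noncomputable def hessQ {n : ℕ} (f : (Fin n → ℝ) → ℝ) (x w : Fin n → ℝ) : ℝ :=
  fderiv ℝ (fun y => fderiv ℝ f y w) x w

section aux

variable {n : ℕ}

/-- derivative of f at x applied to u equals sum of components times grad. -/
lemma fderiv_apply_eq_sum (f : (Fin n → ℝ) → ℝ) (x u : Fin n → ℝ) :
    fderiv ℝ f x u = ∑ i, u i * grad f x i := by
  have hu : u = ∑ i, u i • (Pi.single i 1 : Fin n → ℝ) := by
    rw [← Finset.univ_sum_single u]
    congr 1; ext i j
    by_cases h : j = i <;> simp [Pi.single_apply, smul_eq_mul, h]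
  conv_lhs => rw [hu]
  rw [map_sum]
  simp [grad, smul_eq_mul]

/-- derivative of squaring map -/
lemma hasFDerivAt_sq (v : Fin n → ℝ) :
    HasFDerivAt (fun y : Fin n → ℝ => y * y)
      (v • (ContinuousLinearMap.id ℝ (Fin n → ℝ)) +
       v • (ContinuousLinearMap.id ℝ (Fin n → ℝ))) v :=
  (hasFDerivAt_id v).mul (hasFDerivAt_id v)

lemma hasFDerivAt_F (f : (Fin n → ℝ) → ℝ) (hf : ContDiff ℝ 2 f)
    (F : (Fin n → ℝ) → ℝ) (hF : ∀ v, F v = f (v * v)) (v : Fin n → ℝ) :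
    HasFDerivAt F ((fderiv ℝ f (v * v)).comp
      (v • (ContinuousLinearMap.id ℝ (Fin n → ℝ)) +
       v • (ContinuousLinearMap.id ℝ (Fin n → ℝ)))) v := by
  have hdf : Differentiable ℝ f := hf.differentiable (by norm_num)
  have h1 : HasFDerivAt f (fderiv ℝ f (v * v)) (v * v) := (hdf (v * v)).hasFDerivAt
  have hFeq : F = f ∘ (fun y => y * y) := funext fun y => hF y
  rw [hFeq]
  refine HasFDerivAt.comp v ?_ (hasFDerivAt_sq v)
  exact h1

lemma fderivF_apply (f : (Fin n → ℝ) → ℝ) (hf : ContDiff ℝ 2 f)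
    (F : (Fin n → ℝ) → ℝ) (hF : ∀ v, F v = f (v * v)) (v u : Fin n → ℝ) :
    fderiv ℝ F v u = fderiv ℝ f (v * v) (v * u + v * u) := by
  rw [(hasFDerivAt_F f hf F hF v).fderiv]
  rfl

/-- The second-derivative quadratic form of f itself. -/
lemma hessQ_eq (f : (Fin n → ℝ) → ℝ) (hf : ContDiff ℝ 2 f) (x w : Fin n → ℝ) :
    hessQ f x w = fderiv ℝ (fderiv ℝ f) x w w := by
  have hc1 : ContDiff ℝ 1 (fderiv ℝ f) := hf.fderiv_right (by norm_num)
  have hdf' : Differentiable ℝ (fderiv ℝ f) := hc1.differentiable (by norm_num)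
  have hc : HasFDerivAt (fun y => fderiv ℝ f y) (fderiv ℝ (fderiv ℝ f) x) x :=
    (hdf' x).hasFDerivAt
  have h := hc.clm_apply (hasFDerivAt_const w x)
  rw [hessQ, h.fderiv]
  simp

/-- The second-derivative quadratic form of F. -/
lemma hessQ_F_eq (f : (Fin n → ℝ) → ℝ) (hf : ContDiff ℝ 2 f)
    (F : (Fin n → ℝ) → ℝ) (hF : ∀ v, F v = f (v * v)) (v s : Fin n → ℝ) :
    hessQ F v s = fderiv ℝ (fderiv ℝ f) (v * v) (v * s + v * s) (v * s + v * s)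
      + fderiv ℝ f (v * v) (s * s + s * s) := by
  have hc1 : ContDiff ℝ 1 (fderiv ℝ f) := hf.fderiv_right (by norm_num)
  have hdf' : Differentiable ℝ (fderiv ℝ f) := hc1.differentiable (by norm_num)
  -- rewrite the inner function
  have key : (fun y => fderiv ℝ F y s) = fun y => (fderiv ℝ f (y * y)) (y * s + y * s) := by
    funext y
    exact fderivF_apply f hf F hF y s
  rw [hessQ, key]
  -- c y = fderiv f (y*y), u y = y*s + y*s
  have hc : HasFDerivAt (fun y : Fin n → ℝ => fderiv ℝ f (y * y))
      ((fderiv ℝ (fderiv ℝ f) (v * v)).comp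
        (v • (ContinuousLinearMap.id ℝ (Fin n → ℝ)) +
         v • (ContinuousLinearMap.id ℝ (Fin n → ℝ)))) v := by
    refine HasFDerivAt.comp v ?_ (hasFDerivAt_sq v)
    exact (hdf' (v * v)).hasFDerivAt
  have hu : HasFDerivAt (fun y : Fin n → ℝ => y * s + y * s)
      ((s • (ContinuousLinearMap.id ℝ (Fin n → ℝ)) +
        s • (ContinuousLinearMap.id ℝ (Fin n → ℝ)))) v := by
    have h1 : HasFDerivAt (fun y : Fin n → ℝ => y * s)
        (s • (ContinuousLinearMap.id ℝ (Fin n → ℝ))) v := by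
      have h1' : HasFDerivAt (fun y : Fin n → ℝ => y * s)
          (v • (0 : (Fin n → ℝ) →L[ℝ] (Fin n → ℝ)) +
           s • ContinuousLinearMap.id ℝ (Fin n → ℝ)) v :=
        (hasFDerivAt_id v).mul (hasFDerivAt_const s v)
      simpa using h1'
    exact h1.add h1
  have h := hc.clm_apply hu
  rw [h.fderiv]
  have hss : ((s • (ContinuousLinearMap.id ℝ (Fin n → ℝ)) +
        s • (ContinuousLinearMap.id ℝ (Fin n → ℝ)))) s = s * s + s * s := rfl
  simp only [ContinuousLinearMap.add_apply, ContinuousLinearMap.coe_comp',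
    Function.comp_apply, ContinuousLinearMap.flip_apply, ContinuousLinearMap.smul_apply,
    ContinuousLinearMap.id_apply, smul_eq_mul, hss]
  ring

end aux

theorem stmt3 {n : ℕ} (f : (Fin n → ℝ) → ℝ) (hf : ContDiff ℝ 2 f)
    (F : (Fin n → ℝ) → ℝ) (hF : ∀ v, F v = f (v * v))
    (vs : Fin n → ℝ)
    (hgrad : fderiv ℝ F vs = 0)
    (hpsd : ∀ s : Fin n → ℝ, 0 ≤ hessQ F vs s)
    (xs : Fin n → ℝ) (hxdef : xs = vs * vs) :
    (∀ i, 0 ≤ xs i) ∧ (∀ i, 0 ≤ grad f xs i) ∧ (∀ i, xs i * grad f xs i = 0) ∧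
      (∀ w : Fin n → ℝ, (∀ i, xs i = 0 → w i = 0) → 0 ≤ hessQ f xs w) := by
  set H := fderiv ℝ (fderiv ℝ f) xs with hH
  -- complementarity: vs i * grad f xs i = 0
  have comp : ∀ i, vs i * grad f xs i = 0 := by
    intro i
    have h0 : fderiv ℝ F vs (Pi.single i 1) = 0 := by rw [hgrad]; rfl
    rw [fderivF_apply f hf F hF vs (Pi.single i 1), ← hxdef] at h0
    have heq : vs * Pi.single i 1 + vs * Pi.single i 1 = (2 * vs i) • (Pi.single i 1 : Fin n → ℝ) := by
      funext j
      by_cases h : j = i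
      · subst h; simp [Pi.single_apply]; ring
      · simp [Pi.single_apply, h]
    rw [heq, map_smul] at h0
    have : (2 * vs i) * grad f xs i = 0 := h0
    linarith [this]
  refine ⟨?_, ?_, ?_, ?_⟩
  · intro i; rw [hxdef]; exact mul_self_nonneg (vs i)
  · -- grad f xs i ≥ 0
    intro i
    by_cases hvi : vs i = 0
    · have h := hpsd (Pi.single i 1)
      rw [hessQ_F_eq f hf F hF vs (Pi.single i 1), ← hxdef] at h
      have h1 : vs * Pi.single i 1 + vs * Pi.single i 1 = 0 := by
        funext j
        by_cases hji : j = i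
        · subst hji; simp [Pi.single_apply, hvi]
        · simp [Pi.single_apply, hji]
      have h2 : (Pi.single i 1 : Fin n → ℝ) * Pi.single i 1 + Pi.single i 1 * Pi.single i 1
          = (2 : ℝ) • (Pi.single i 1 : Fin n → ℝ) := by
        funext j
        by_cases hji : j = i
        · subst hji; simp [Pi.single_apply]; norm_num
        · simp [Pi.single_apply, hji]
      rw [h1, h2, map_smul] at h
      simp only [map_zero, ContinuousLinearMap.zero_apply, zero_add, smul_eq_mul] at h
      have : (0 : ℝ) ≤ 2 * grad f xs i := h
      linarith
    · have := comp i
      rcases mul_eq_zero.mp this with h | h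
      · exact absurd h hvi
      · rw [h]
  · intro i
    have hxi : xs i = vs i * vs i := by rw [hxdef]; rfl
    rw [hxi, mul_assoc, comp i, mul_zero]
  · -- second order condition
    intro w hw
    set s : Fin n → ℝ := fun i => if vs i = 0 then 0 else w i / vs i with hs
    have hvs : vs * s = w := by
      funext i
      by_cases h : vs i = 0
      · have : xs i = 0 := by rw [hxdef]; simp [h]
        simp [hs, h, hw i this]
      · simp [hs, h]
        field_simp
    have h := hpsd s
    rw [hessQ_F_eq f hf F hF vs s, ← hxdef, hvs] at h
    have hz : fderiv ℝ f xs (s * s + s * s) = 0 := by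
      rw [fderiv_apply_eq_sum]
      apply Finset.sum_eq_zero
      intro i _
      by_cases hvi : vs i = 0
      · simp [hs, hvi]
      · have := comp i
        rcases mul_eq_zero.mp this with h' | h'
        · exact absurd h' hvi
        · simp [h']
    rw [hz, add_zero] at h
    have hq : fderiv ℝ (fderiv ℝ f) xs (w + w) (w + w) = 4 * hessQ f xs w := by
      rw [hessQ_eq f hf]
      simp only [map_add, ContinuousLinearMap.add_apply]
      ring
    rw [hq] at h
    linarith
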